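/- Let (E, j) be a soft inductive system of normed spaces, with limit space E_∞ := C(E,j)/C_0(E) equipped with the quotient norm. If each E_n is complete (a Banach space), then E_∞ is a Banach space. -/

import Mathlib

open Filter Topology

section SoftSystems

variable {ι : Type*} [Preorder ι] {E : ι → Type*} [∀ n, NormedAddCommGroup (E n)]
  [∀ n, NormedSpace ℂ (E n)]

/-- A *soft inductive system* of normed spaces: the connecting maps `j n m : E m → E n`
(for `m ≤ n`) are linear contractions and are asymptotically transitive:
`lim_m limsup_n ‖(j n l − j n m ∘ j m l) a‖ = 0` for every `l` and `a : E l`. -/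
def IsSoftSystem (j : ∀ n m, E m →L[ℂ] E n) : Prop :=
  (∀ n m, m ≤ n → ‖j n m‖ ≤ 1) ∧
  ∀ (l : ι) (a : E l),
    Tendsto (fun m => limsup (fun n => ‖j n l a - j n m (j m l a)‖) atTop) atTop (𝓝 0)

/-- A net is *j-convergent* if `lim_m limsup_n ‖a n − j n m (a m)‖ = 0`. -/
def JConv (j : ∀ n m, E m →L[ℂ] E n) (a : ∀ n, E n) : Prop :=
  Tendsto (fun m => limsup (fun n => ‖a n - j n m (a m)‖) atTop) atTop (𝓝 0)

/-- A net is *null* if its norms tend to zero along the directed index set. -/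
def IsNullNet (a : ∀ n, E n) : Prop :=
  Tendsto (fun n => ‖a n‖) atTop (𝓝 0)

end SoftSystems

/-- If `(E, j)` is a soft inductive system of Banach spaces, then the limit
space `E_∞ = C(E,j)/C₀(E)` (the quotient of the j-convergent bounded nets by the null nets,
with the quotient norm) is a Banach space, i.e. complete. -/
theorem stmt4 {ι : Type*} [Preorder ι] [Nonempty ι] [IsDirected ι (· ≤ ·)]
    {E : ι → Type*} [∀ n, NormedAddCommGroup (E n)] [∀ n, NormedSpace ℂ (E n)]
    [∀ n, CompleteSpace (E n)]
    (j : ∀ n m, E m →L[ℂ] E n) (hj : IsSoftSystem j)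
    (C : Submodule ℂ (lp E ⊤)) (C₀ : Submodule ℂ (lp E ⊤))
    (hC : (C : Set (lp E ⊤)) = {f : lp E ⊤ | JConv j (fun n => f n)})
    (hC₀ : (C₀ : Set (lp E ⊤)) = {f : lp E ⊤ | IsNullNet (fun n => f n)}) :
    CompleteSpace (C ⧸ (C₀.comap C.subtype)) := by
  haveI : Fact ((1:ENNReal) ≤ ⊤) := ⟨le_top⟩
  haveI : NeBot (atTop : Filter ι) := atTop_neBot
  -- boundedness of the relevant families
  have hbdd : ∀ (g : lp E ⊤) (m : ι), IsBoundedUnder (· ≤ ·) (atTop : Filter ι)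
      (fun n => ‖g n - j n m (g m)‖) := by
    intro g m
    refine ⟨2 * ‖g‖, eventually_map.2 <| (eventually_ge_atTop m).mono fun n hn => ?_⟩
    have h1 : ‖g n‖ ≤ ‖g‖ := lp.norm_apply_le_norm (by simp) g n
    have h2 : ‖j n m (g m)‖ ≤ ‖g m‖ := by
      calc ‖j n m (g m)‖ ≤ ‖j n m‖ * ‖g m‖ := (j n m).le_opNorm _
      _ ≤ 1 * ‖g m‖ := mul_le_mul_of_nonneg_right (hj.1 n m hn) (norm_nonneg _)
      _ = ‖g m‖ := one_mul _
    have h3 : ‖g m‖ ≤ ‖g‖ := lp.norm_apply_le_norm (by simp) g m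
    calc ‖g n - j n m (g m)‖ ≤ ‖g n‖ + ‖j n m (g m)‖ := norm_sub_le _ _
    _ ≤ ‖g‖ + ‖g‖ := add_le_add h1 (h2.trans h3)
    _ = 2 * ‖g‖ := by ring
  have hcob : ∀ (g : lp E ⊤) (m : ι), IsCoboundedUnder (· ≤ ·) (atTop : Filter ι)
      (fun n => ‖g n - j n m (g m)‖) := fun g m =>
    isCoboundedUnder_le_of_le atTop fun n => norm_nonneg _
  -- the key estimate : the defect of `f` is controlled by that of `h` plus `2‖f - h‖`
  have key : ∀ (f h : lp E ⊤) (m : ι),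
      limsup (fun n => ‖f n - j n m (f m)‖) atTop
        ≤ limsup (fun n => ‖h n - j n m (h m)‖) atTop + 2 * ‖f - h‖ := by
    intro f h m
    have hptwise : ∀ᶠ n in (atTop : Filter ι),
        ‖f n - j n m (f m)‖ ≤ ‖h n - j n m (h m)‖ + 2 * ‖f - h‖ := by
      refine (eventually_ge_atTop m).mono fun n hn => ?_
      have e1 : ‖f n - h n‖ ≤ ‖f - h‖ := by
        have := lp.norm_apply_le_norm (show (⊤:ENNReal) ≠ 0 by simp) (f - h) n
        simpa using this
      have e2 : ‖j n m (f m - h m)‖ ≤ ‖f - h‖ := by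
        have hfm : ‖f m - h m‖ ≤ ‖f - h‖ := by
          have := lp.norm_apply_le_norm (show (⊤:ENNReal) ≠ 0 by simp) (f - h) m
          simpa using this
        calc ‖j n m (f m - h m)‖ ≤ ‖j n m‖ * ‖f m - h m‖ := (j n m).le_opNorm _
        _ ≤ 1 * ‖f m - h m‖ := mul_le_mul_of_nonneg_right (hj.1 n m hn) (norm_nonneg _)
        _ ≤ ‖f - h‖ := by simpa using hfm
      calc ‖f n - j n m (f m)‖
          = ‖(h n - j n m (h m)) + ((f n - h n) - j n m (f m - h m))‖ := by
            congr 1; rw [map_sub]; abel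
      _ ≤ ‖h n - j n m (h m)‖ + ‖(f n - h n) - j n m (f m - h m)‖ := norm_add_le _ _
      _ ≤ ‖h n - j n m (h m)‖ + (‖f n - h n‖ + ‖j n m (f m - h m)‖) := by
            gcongr; exact norm_sub_le _ _
      _ ≤ ‖h n - j n m (h m)‖ + (‖f - h‖ + ‖f - h‖) := by gcongr
      _ = ‖h n - j n m (h m)‖ + 2 * ‖f - h‖ := by ring
    have hbdd' : IsBoundedUnder (· ≤ ·) (atTop : Filter ι)
        (fun n => ‖h n - j n m (h m)‖ + 2 * ‖f - h‖) := by
      obtain ⟨b, hb⟩ := hbdd h m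
      exact ⟨b + 2 * ‖f - h‖, eventually_map.2 <|
        (eventually_map.1 hb).mono fun n hn => add_le_add hn le_rfl⟩
    calc limsup (fun n => ‖f n - j n m (f m)‖) atTop
        ≤ limsup (fun n => ‖h n - j n m (h m)‖ + 2 * ‖f - h‖) atTop :=
          limsup_le_limsup hptwise (hcob f m) hbdd'
    _ = limsup (fun n => ‖h n - j n m (h m)‖) atTop + 2 * ‖f - h‖ :=
          limsup_add_const atTop _ _ (hbdd h m) (hcob h m)
  -- the set of j-convergent nets is closed in `lp E ⊤`
  have hclosed : IsClosed {f : lp E ⊤ | JConv j (fun n => f n)} := by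
    refine isClosed_of_closure_subset fun f hf => ?_
    simp only [Set.mem_setOf_eq, JConv]
    rw [Metric.tendsto_nhds]
    intro ε hε
    obtain ⟨h, hhs, hdist⟩ := Metric.mem_closure_iff.1 hf (ε/4) (by linarith)
    simp only [Set.mem_setOf_eq, JConv] at hhs
    have hfh : ‖f - h‖ < ε/4 := by rwa [← dist_eq_norm]
    have hh0 : ∀ᶠ m in (atTop : Filter ι),
        limsup (fun n => ‖h n - j n m (h m)‖) atTop < ε/4 := by
      have := Metric.tendsto_nhds.1 hhs (ε/4) (by linarith)
      refine this.mono fun m hm => ?_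
      rw [Real.dist_eq, sub_zero] at hm
      exact (le_abs_self _).trans_lt hm
    refine hh0.mono fun m hm => ?_
    rw [Real.dist_eq, sub_zero, abs_of_nonneg]
    · calc limsup (fun n => ‖f n - j n m (f m)‖) atTop
          ≤ limsup (fun n => ‖h n - j n m (h m)‖) atTop + 2 * ‖f - h‖ := key f h m
      _ < ε/4 + 2 * (ε/4) := by
          have : 2 * ‖f - h‖ < 2 * (ε/4) := by linarith
          linarith
      _ ≤ ε := by linarith
    · exact le_limsup_of_frequently_le
        ((Eventually.of_forall fun n => norm_nonneg _).frequently) (hbdd f m)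
  -- hence `C` is a complete subspace, and the quotient is complete
  have hCc : IsClosed (C : Set (lp E ⊤)) := hC ▸ hclosed
  haveI : CompleteSpace C := hCc.completeSpace_coe
  infer_instance
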